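/- Let λ ≥ 0 and let f ∈ M_σ^λ(φ) have Taylor coefficients aₙ. If (1+λ)B₁ ≥ |B₁² + (1+λ)(B₁−B₂)|, then |a₂| ≤ B₁/(1+λ). -/

import Mathlib

open Metric Set Filter Topology

noncomputable section

/-- `f` is bi-univalent on the unit disk, with `g` the univalent analytic
continuation of `f⁻¹` to the unit disk. -/
def IsBiUnivalent (f g : ℂ → ℂ) : Prop :=
  DifferentiableOn ℂ f (ball 0 1) ∧ f 0 = 0 ∧ deriv f 0 = 1 ∧
  Set.InjOn f (ball 0 1) ∧
  DifferentiableOn ℂ g (ball 0 1) ∧ Set.InjOn g (ball 0 1) ∧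
  ∀ w : ℂ, ‖w‖ < 1/4 → f (g w) = w

/-- `φ` is an analytic univalent function on the unit disk with positive real
part there, normalized by `φ 0 = 1`. -/
def IsMaMinda (φ : ℂ → ℂ) : Prop :=
  DifferentiableOn ℂ φ (ball 0 1) ∧ Set.InjOn φ (ball 0 1) ∧ φ 0 = 1 ∧
  ∀ z ∈ ball (0:ℂ) 1, 0 < (φ z).re

/-- Membership in `M^λ(φ)`: `f` is normalized analytic on the unit disk and
`λ(1 + z f''(z)/f'(z)) + (1-λ) z f'(z)/f(z) ≺ φ(z)`. -/
def MemMlam (lam : ℝ) (φ f : ℂ → ℂ) : Prop :=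
  DifferentiableOn ℂ f (ball 0 1) ∧ f 0 = 0 ∧ deriv f 0 = 1 ∧
  ∃ ω : ℂ → ℂ, DifferentiableOn ℂ ω (ball 0 1) ∧ ω 0 = 0 ∧
    (∀ z ∈ ball (0:ℂ) 1, ω z ∈ ball (0:ℂ) 1) ∧
    ∀ z ∈ ball (0:ℂ) 1, z ≠ 0 →
      (lam : ℂ) * (1 + z * iteratedDeriv 2 f z / deriv f z)
        + (1 - (lam : ℂ)) * (z * deriv f z / f z) = φ (ω z)

theorem stmt_9
    (lam : ℝ) (hlam : 0 ≤ lam) (φ f g : ℂ → ℂ)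
    (B₁ : ℝ) (B₂ B₃ : ℂ) (hB₁ : 0 < B₁)
    (hφ : IsMaMinda φ)
    (hφ1 : deriv φ 0 = (B₁:ℂ))
    (hφ2 : iteratedDeriv 2 φ 0 = 2 * B₂)
    (hφ3 : iteratedDeriv 3 φ 0 = 6 * B₃)
    (hbi : IsBiUnivalent f g)
    (hf : MemMlam lam φ f) (hg : MemMlam lam φ g)
    (a : ℕ → ℂ) (ha : ∀ n, a n = iteratedDeriv n f 0 / (n.factorial : ℂ))
    (D₁ : ℂ) (hD₁ : D₁ = (B₁:ℂ)^2 + (1 + (lam:ℂ)) * ((B₁:ℂ) - B₂))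
    (hcond : ‖D₁‖ ≤ (1 + lam) * B₁) :
    ‖a 2‖ ≤ B₁ / (1 + lam) := by
  obtain ⟨hfd, hf0, hf1, ω, hωd, hω0, hωmap, heq⟩ := hf
  have h0mem : (0:ℂ) ∈ ball (0:ℂ) 1 := by simp
  have hball : ball (0:ℂ) 1 ∈ 𝓝 (0:ℂ) := isOpen_ball.mem_nhds h0mem
  -- analyticity
  have hAf : AnalyticOnNhd ℂ f (ball 0 1) := hfd.analyticOnNhd isOpen_ball
  have hAdf : AnalyticOnNhd ℂ (deriv f) (ball 0 1) := hAf.deriv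
  have hAddf : AnalyticOnNhd ℂ (deriv (deriv f)) (ball 0 1) := hAdf.deriv
  -- the factor u with f z = z * u z
  set u : ℂ → ℂ := dslope f 0 with hu_def
  have hud : DifferentiableOn ℂ u (ball 0 1) :=
    (Complex.differentiableOn_dslope hball).mpr hfd
  have hAu : AnalyticOnNhd ℂ u (ball 0 1) := hud.analyticOnNhd isOpen_ball
  have hAdu : AnalyticOnNhd ℂ (deriv u) (ball 0 1) := hAu.deriv
  have hu0 : u 0 = 1 := by rw [hu_def, dslope_same, hf1]
  have hfzu : ∀ z : ℂ, f z = z * u z := by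
    intro z
    rcases eq_or_ne z 0 with rfl | hz
    · simp [hf0]
    · rw [hu_def, dslope_of_ne _ hz, slope_def_field, hf0]
      field_simp
      ring
  -- deriv f z = u z + z * deriv u z on the ball
  have hdf : ∀ z ∈ ball (0:ℂ) 1, deriv f z = u z + z * deriv u z := by
    intro z hz
    have h1 : HasDerivAt f (1 * u z + z * deriv u z) z := by
      have hmul := (hasDerivAt_id z).mul ((hAu z hz).differentiableAt.hasDerivAt)
      exact hmul.congr_of_eventuallyEq (Eventually.of_forall fun w => by simpa using hfzu w)
    simpa using h1.deriv
  -- second derivative of f at 0 equals 2 * deriv u 0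
  set k : ℂ := deriv (deriv f) 0 with hk_def
  have hdu0 : deriv u 0 = k / 2 := by
    have hev : deriv f =ᶠ[𝓝 0] fun z => u z + z * deriv u z := by
      filter_upwards [hball] with z hz using hdf z hz
    have h2 : HasDerivAt (fun z : ℂ => u z + z * deriv u z)
        (deriv u 0 + (1 * deriv u 0 + 0 * deriv (deriv u) 0)) 0 := by
      exact ((hAu 0 h0mem).differentiableAt.hasDerivAt).add
        ((hasDerivAt_id 0).mul ((hAdu 0 h0mem).differentiableAt.hasDerivAt))
    have : deriv (deriv f) 0 = deriv u 0 + (1 * deriv u 0 + 0 * deriv (deriv u) 0) := by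
      rw [hev.deriv_eq, h2.deriv]
    rw [hk_def]
    rw [this]; ring
  have hi2 : iteratedDeriv 2 f 0 = k := by
    rw [show (2:ℕ) = 1 + 1 from rfl, iteratedDeriv_succ, iteratedDeriv_one]
  have ha2 : a 2 = k / 2 := by
    rw [ha 2, hi2]; norm_num [Nat.factorial]
  -- the auxiliary analytic function H
  set H : ℂ → ℂ := fun z =>
    (lam : ℂ) * (1 + z * iteratedDeriv 2 f z / deriv f z)
      + (1 - (lam : ℂ)) * (deriv f z / u z) with hH_def
  -- H agrees with φ ∘ ω near 0
  have hueq : ∀ᶠ z in 𝓝 (0:ℂ), u z ≠ 0 := by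
    have hc : ContinuousAt u 0 := (hAu 0 h0mem).continuousAt
    exact hc.eventually_ne (by rw [hu0]; exact one_ne_zero)
  have hHeq : H =ᶠ[𝓝 (0:ℂ)] (φ ∘ ω) := by
    filter_upwards [hball, hueq] with z hz huz
    rcases eq_or_ne z 0 with rfl | hzne
    · have : φ (ω 0) = 1 := by rw [hω0, hφ.2.2.1]
      simp [hH_def, hf1, hu0, this]
    · have hstep : z * deriv f z / f z = deriv f z / u z := by
        rw [hfzu z, mul_div_mul_left _ _ hzne]
      have := heq z hz hzne
      rw [hstep] at this
      simpa [hH_def] using this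
  -- derivative of the right side
  have hωdiff : DifferentiableAt ℂ ω 0 := (hωd.analyticOnNhd isOpen_ball 0 h0mem).differentiableAt
  have hφdiff : DifferentiableAt ℂ φ (ω 0) := by
    rw [hω0]; exact (hφ.1.analyticOnNhd isOpen_ball 0 h0mem).differentiableAt
  have hrhs : deriv (φ ∘ ω) 0 = (B₁ : ℂ) * deriv ω 0 := by
    rw [deriv_comp 0 hφdiff hωdiff, hω0, hφ1]
  -- derivative of H at 0
  have hi2e : (fun z => iteratedDeriv 2 f z) = deriv (deriv f) := by
    funext z
    rw [show (2:ℕ) = 1 + 1 from rfl, iteratedDeriv_succ, iteratedDeriv_one]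
  have hdi2 : DifferentiableAt ℂ (fun z => iteratedDeriv 2 f z) 0 := by
    rw [hi2e]; exact (hAddf 0 h0mem).differentiableAt
  have hddf : DifferentiableAt ℂ (deriv f) 0 := (hAdf 0 h0mem).differentiableAt
  have hdu : DifferentiableAt ℂ u 0 := (hAu 0 h0mem).differentiableAt
  have hA : HasDerivAt (fun z => z * iteratedDeriv 2 f z / deriv f z) k 0 := by
    have hnum : HasDerivAt (fun z : ℂ => z * iteratedDeriv 2 f z)
        (1 * iteratedDeriv 2 f 0 + 0 * deriv (fun z => iteratedDeriv 2 f z) 0) 0 :=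
      (hasDerivAt_id 0).mul hdi2.hasDerivAt
    have := hnum.div hddf.hasDerivAt (by rw [hf1]; exact one_ne_zero)
    have hval : ((1 * iteratedDeriv 2 f 0 + 0 * deriv (fun z => iteratedDeriv 2 f z) 0)
        * deriv f 0 - (0 : ℂ) * iteratedDeriv 2 f 0 * deriv (deriv f) 0) / deriv f 0 ^ 2 = k := by
      rw [hf1, hi2]; ring
    rwa [hval] at this
  have hB : HasDerivAt (fun z => deriv f z / u z) (k / 2) 0 := by
    have := hddf.hasDerivAt.div hdu.hasDerivAt (by rw [hu0]; exact one_ne_zero)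
    have hval : (deriv (deriv f) 0 * u 0 - deriv f 0 * deriv u 0) / u 0 ^ 2 = k / 2 := by
      rw [hu0, hf1, hdu0]; ring
    rwa [hval] at this
  have hH : HasDerivAt H ((lam : ℂ) * (0 + k) + (1 - (lam : ℂ)) * (k / 2)) 0 := by
    exact (((hasDerivAt_const 0 (1:ℂ)).add hA).const_mul _).add (hB.const_mul _)
  -- the key identity
  have hkey : ((1 : ℂ) + (lam : ℂ)) * a 2 = (B₁ : ℂ) * deriv ω 0 := by
    have : (lam : ℂ) * (0 + k) + (1 - (lam : ℂ)) * (k / 2) = deriv (φ ∘ ω) 0 := by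
      rw [← hH.deriv]; exact hHeq.deriv_eq
    rw [hrhs] at this
    rw [ha2, ← this]; ring
  -- Schwarz lemma
  have hmaps : MapsTo ω (ball (0:ℂ) 1) (ball (ω 0) 1) := by
    intro z hz; rw [hω0]; exact hωmap z hz
  have hschwarz : ‖deriv ω 0‖ ≤ 1 :=
    Complex.norm_deriv_le_one_of_mapsTo_ball hωd (hmaps.mono_right ball_subset_closedBall) one_pos
  -- conclude
  have hpos : (0:ℝ) < 1 + lam := by linarith
  have habs : (1 + lam) * ‖a 2‖ = B₁ * ‖deriv ω 0‖ := by
    have := congrArg (‖·‖) hkey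
    rwa [norm_mul, norm_mul, show ‖((1 : ℂ) + (lam : ℂ))‖ = 1 + lam by
        rw [show ((1 : ℂ) + (lam : ℂ)) = ((1 + lam : ℝ) : ℂ) by push_cast; ring,
          Complex.norm_real, Real.norm_eq_abs, abs_of_pos hpos],
      Complex.norm_real, Real.norm_eq_abs, abs_of_pos hB₁] at this
  rw [le_div_iff₀ hpos, mul_comm]
  rw [habs]
  calc B₁ * ‖deriv ω 0‖ ≤ B₁ * 1 := by
        exact mul_le_mul_of_nonneg_left hschwarz hB₁.le
    _ = B₁ := mul_one _
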